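/- The function E(t, f, τ, l) = ε·C·(R − l)·f² + (e^{l/(τ t)} − 1)·τ t/h is block multi-convex on t > 0, f ≥ 0, τ > 0, 0 ≤ l ≤ R: it is convex in each of the four variables when the other three are held fixed (with ε, C, R, h > 0), but it is not jointly convex in (τ, l, t) in general. -/

import Mathlib

lemma hasDerivAt_g (a : ℝ) {t : ℝ} (ht : t ≠ 0) :
    HasDerivAt (fun t => (Real.exp (a / t) - 1) * t)
      (Real.exp (a / t) * (1 - a / t) - 1) t := by
  have h1 : HasDerivAt (fun t : ℝ => a / t) (-(a / t ^ 2)) t := by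
    have := (hasDerivAt_inv ht).const_mul a
    convert this using 1
    rfl
    rfl
    rfl
    field_simp
  have h2 := (h1.exp.sub_const 1).mul (hasDerivAt_id t)
  convert h2 using 1
  rfl
  rfl
  rfl
  simp only [id]
  field_simp
  ring

lemma hasDerivAt_g' (a : ℝ) {t : ℝ} (ht : t ≠ 0) :
    HasDerivAt (fun t => Real.exp (a / t) * (1 - a / t) - 1)
      (Real.exp (a / t) * a ^ 2 / t ^ 3) t := by
  have h1 : HasDerivAt (fun t : ℝ => a / t) (-(a / t ^ 2)) t := by
    have := (hasDerivAt_inv ht).const_mul a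
    convert this using 1
    rfl
    rfl
    rfl
    field_simp
  have h2 := ((h1.exp.mul ((h1.const_mul (-1)).add_const 1)).sub_const 1)
  have heq : (fun t : ℝ => Real.exp (a / t) * (1 - a / t) - 1)
      = fun t : ℝ => Real.exp (a / t) * ((-1) * (a / t) + 1) - 1 := by
    funext x; ring
  rw [heq]
  convert h2 using 1
  rfl
  rfl
  rfl
  field_simp
  ring

lemma gconv (a : ℝ) : ConvexOn ℝ (Set.Ioi (0:ℝ)) (fun t => (Real.exp (a / t) - 1) * t) := by
  set g : ℝ → ℝ := fun t => (Real.exp (a / t) - 1) * t with hgdef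
  set g1 : ℝ → ℝ := fun t => Real.exp (a / t) * (1 - a / t) - 1 with hg1def
  have hg : ∀ x ∈ Set.Ioi (0:ℝ), HasDerivAt g (g1 x) x := fun x hx =>
    hasDerivAt_g a (ne_of_gt hx)
  have hd : Set.EqOn (deriv g) g1 (Set.Ioi 0) := fun x hx => (hg x hx).deriv
  have hint : interior (Set.Ioi (0:ℝ)) = Set.Ioi 0 := interior_Ioi
  have hev : ∀ x ∈ Set.Ioi (0:ℝ), deriv g =ᶠ[nhds x] g1 := fun x hx =>
    Filter.eventuallyEq_of_mem (isOpen_Ioi.mem_nhds hx) hd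
  have hg' : ∀ x ∈ Set.Ioi (0:ℝ), HasDerivAt (deriv g) (Real.exp (a / x) * a ^ 2 / x ^ 3) x :=
    fun x hx => (hasDerivAt_g' a (ne_of_gt hx)).congr_of_eventuallyEq (hev x hx)
  refine convexOn_of_deriv2_nonneg (convex_Ioi 0) ?_ ?_ ?_ ?_
  · exact fun x hx => (hg x hx).differentiableAt.continuousAt.continuousWithinAt
  · rw [hint]; exact fun x hx => (hg x hx).differentiableAt.differentiableWithinAt
  · rw [hint]; exact fun x hx => (hg' x hx).differentiableAt.differentiableWithinAt
  · rw [hint]; intro x hx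
    have hder : deriv (deriv g) x = Real.exp (a / x) * a ^ 2 / x ^ 3 := (hg' x hx).deriv
    simp only [Function.iterate_succ, Function.iterate_zero, Function.comp, id]
    rw [hder]
    have hx' : (0:ℝ) < x := hx
    positivity

lemma expLin (k : ℝ) : ConvexOn ℝ Set.univ (fun x : ℝ => Real.exp (x * k)) := by
  refine ⟨convex_univ, fun x _ y _ a b ha hb hab => ?_⟩
  have h := convexOn_exp.2 (Set.mem_univ (x*k)) (Set.mem_univ (y*k)) ha hb hab
  simp only [smul_eq_mul] at h ⊢
  calc Real.exp ((a*x+b*y)*k) = Real.exp (a*(x*k)+b*(y*k)) := by ring_nf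
  _ ≤ a * Real.exp (x*k) + b * Real.exp (y*k) := h

lemma affineConv (m b : ℝ) : ConvexOn ℝ (Set.univ : Set ℝ) (fun x => m * x + b) := by
  refine ⟨convex_univ, fun x _ y _ a c ha hc hac => ?_⟩
  simp only [smul_eq_mul]
  have : a * (m * x + b) + c * (m * y + b) = m * (a * x + c * y) + (a + c) * b := by ring
  rw [this, hac, one_mul]

/-- Total per-user energy: local energy plus transmission energy. -/
noncomputable def Etot (ε C R h : ℝ) (t f τ l : ℝ) : ℝ :=
  ε * C * (R - l) * f ^ 2 + (Real.exp (l / (τ * t)) - 1) * τ * t / h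

/-- E(t, f, τ, l) = εC(R-l)f² + (e^{l/(τt)} - 1)τt/h is block multi-convex:
convex in each of t, f, τ, l separately (on t > 0, f ≥ 0, τ > 0, 0 ≤ l ≤ R,
with ε, C, R, h > 0), but not jointly convex in (τ, l, t) in general. -/
theorem energy_block_multiconvex
    (ε C R h : ℝ) (hε : 0 < ε) (hC : 0 < C) (hR : 0 < R) (hh : 0 < h) :
    (∀ f ∈ Set.Ici (0 : ℝ), ∀ τ ∈ Set.Ioi (0 : ℝ), ∀ l ∈ Set.Icc (0 : ℝ) R,
      ConvexOn ℝ (Set.Ioi (0 : ℝ)) (fun t => Etot ε C R h t f τ l)) ∧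
    (∀ t ∈ Set.Ioi (0 : ℝ), ∀ τ ∈ Set.Ioi (0 : ℝ), ∀ l ∈ Set.Icc (0 : ℝ) R,
      ConvexOn ℝ (Set.Ici (0 : ℝ)) (fun f => Etot ε C R h t f τ l)) ∧
    (∀ t ∈ Set.Ioi (0 : ℝ), ∀ f ∈ Set.Ici (0 : ℝ), ∀ l ∈ Set.Icc (0 : ℝ) R,
      ConvexOn ℝ (Set.Ioi (0 : ℝ)) (fun τ => Etot ε C R h t f τ l)) ∧
    (∀ t ∈ Set.Ioi (0 : ℝ), ∀ f ∈ Set.Ici (0 : ℝ), ∀ τ ∈ Set.Ioi (0 : ℝ),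
      ConvexOn ℝ (Set.Icc (0 : ℝ) R) (fun l => Etot ε C R h t f τ l)) ∧
    (∃ ε' C' R' h' f' : ℝ, 0 < ε' ∧ 0 < C' ∧ 0 < R' ∧ 0 < h' ∧ 0 ≤ f' ∧
      ¬ ConvexOn ℝ
        {p : ℝ × ℝ × ℝ | 0 < p.1 ∧ 0 ≤ p.2.1 ∧ p.2.1 ≤ R' ∧ 0 < p.2.2}
        (fun p => Etot ε' C' R' h' p.2.2 f' p.1 p.2.1)) := by
  refine ⟨?_, ?_, ?_, ?_, ?_⟩
  · -- convex in t
    intro f hf τ hτ l hl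
    have hτ' : (0:ℝ) < τ := hτ
    have hc := ((gconv (l / τ)).smul (div_nonneg hτ'.le hh.le)).add
      (convexOn_const (ε * C * (R - l) * f ^ 2) (convex_Ioi 0))
    have hfun : (fun t => Etot ε C R h t f τ l)
        = fun t => (τ / h) • ((Real.exp (l / τ / t) - 1) * t) + ε * C * (R - l) * f ^ 2 := by
      funext t
      simp only [Etot, smul_eq_mul, div_div]
      ring
    rw [hfun]; exact hc
  · -- convex in f
    intro t ht τ hτ l hl
    have hnn : (0:ℝ) ≤ ε * C * (R - l) := by
      have := hl.2
      have h1 : (0:ℝ) ≤ R - l := by linarith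
      positivity
    have hc := (((Even.convexOn_pow even_two).smul hnn).add
      (convexOn_const ((Real.exp (l / (τ * t)) - 1) * τ * t / h) convex_univ)).subset
      (Set.subset_univ _) (convex_Ici 0)
    have hfun : (fun f => Etot ε C R h t f τ l)
        = fun f : ℝ => (ε * C * (R - l)) • f ^ 2 + (Real.exp (l / (τ * t)) - 1) * τ * t / h := by
      funext f
      simp only [Etot, smul_eq_mul]
    rw [hfun]; exact hc
  · -- convex in τ
    intro t ht f hf l hl
    have ht' : (0:ℝ) < t := ht
    have hc := ((gconv (l / t)).smul (div_nonneg ht'.le hh.le)).add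
      (convexOn_const (ε * C * (R - l) * f ^ 2) (convex_Ioi 0))
    have hfun : (fun τ => Etot ε C R h t f τ l)
        = fun τ => (t / h) • ((Real.exp (l / t / τ) - 1) * τ) + ε * C * (R - l) * f ^ 2 := by
      funext τ
      simp only [Etot, smul_eq_mul, div_div]
      rw [mul_comm t τ]
      ring
    rw [hfun]; exact hc
  · -- convex in l
    intro t ht f hf τ hτ
    have ht' : (0:ℝ) < t := ht
    have hτ' : (0:ℝ) < τ := hτ
    have hnn : (0:ℝ) ≤ τ * t / h := by positivity
    have hc := ((((expLin (1 / (τ * t))).smul hnn).add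
      (affineConv (-(ε * C * f ^ 2)) (ε * C * R * f ^ 2 - τ * t / h))).subset
      (Set.subset_univ _) (convex_Icc 0 R))
    have hfun : (fun l => Etot ε C R h t f τ l)
        = fun l : ℝ => (τ * t / h) • Real.exp (l * (1 / (τ * t)))
            + (-(ε * C * f ^ 2) * l + (ε * C * R * f ^ 2 - τ * t / h)) := by
      funext l
      simp only [Etot, smul_eq_mul, mul_one_div]
      ring
    rw [hfun]; exact hc
  · -- not jointly convex
    refine ⟨1, 1, 2, 1, 0, one_pos, one_pos, two_pos, one_pos, le_refl 0, ?_⟩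
    intro hcv
    set S : Set (ℝ × ℝ × ℝ) := {p : ℝ × ℝ × ℝ | 0 < p.1 ∧ 0 ≤ p.2.1 ∧ p.2.1 ≤ 2 ∧ 0 < p.2.2}
    have ha : ((1:ℝ)/2, (0:ℝ), (1:ℝ)/2) ∈ S := by norm_num [S, Set.mem_setOf_eq]
    have hb : ((3:ℝ)/2, (2:ℝ), (3:ℝ)/2) ∈ S := by norm_num [S, Set.mem_setOf_eq]
    have h := hcv.2 ha hb (by norm_num : (0:ℝ) ≤ 1/2) (by norm_num : (0:ℝ) ≤ 1/2)
      (by norm_num : (1:ℝ)/2 + 1/2 = 1)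
    have hmid : ((1:ℝ)/2) • (((1:ℝ)/2, (0:ℝ), (1:ℝ)/2) : ℝ × ℝ × ℝ)
        + ((1:ℝ)/2) • (((3:ℝ)/2, (2:ℝ), (3:ℝ)/2) : ℝ × ℝ × ℝ) = (1, 1, 1) := by
      norm_num [Prod.ext_iff]
    rw [hmid] at h
    simp only [Etot, smul_eq_mul] at h
    norm_num at h
    -- h : exp 1 - 1 ≤ ... with exp (8/9)
    have hE : Real.exp (8/9) < 9/10 * Real.exp 1 := by
      have h1 : (1:ℝ)/9 + 1 < Real.exp (1/9) := Real.add_one_lt_exp (by norm_num)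
      have h2 : Real.exp (8/9) * Real.exp (1/9) = Real.exp 1 := by
        rw [← Real.exp_add]; norm_num
      nlinarith [Real.exp_pos (8/9)]
    have he10 : Real.exp 1 < 10 :=
      lt_trans Real.exp_one_lt_d9 (by norm_num)
    nlinarith [h, hE, he10, Real.exp_pos (8/9)]
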